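/- The class of holonomic formal power series over ℂ is closed under addition and under Cauchy product (multiplication). -/

import Mathlib

open Finset

/-- A sequence is holonomic (P-recursive) if it satisfies a linear recurrence
with polynomial coefficients whose leading coefficient is not identically zero. -/
def HolonomicSeq (f : ℕ → ℂ) : Prop :=
  ∃ (d : ℕ) (p : ℕ → Polynomial ℂ), p 0 ≠ 0 ∧
    ∀ n : ℕ, ∑ j ∈ Finset.range (d + 1), (p j).eval (n : ℂ) * f (n + (d - j)) = 0

/-- Formal derivative of a power series. -/
noncomputable def psDeriv (f : PowerSeries ℂ) : PowerSeries ℂ :=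
  PowerSeries.mk fun n => ((n : ℂ) + 1) * PowerSeries.coeff (R := ℂ) (n + 1) f

/-- A formal power series is holonomic (D-finite) if it satisfies a linear ODE
with polynomial coefficients whose leading coefficient is nonzero. -/
def HolonomicPS (f : PowerSeries ℂ) : Prop :=
  ∃ (e : ℕ) (q : ℕ → Polynomial ℂ), q 0 ≠ 0 ∧
    ∑ k ∈ Finset.range (e + 1), (q k : PowerSeries ℂ) * psDeriv^[e - k] f = 0

namespace HoloAux
open Polynomial PowerSeries
noncomputable section

abbrev Rr : Type := Polynomial ℂ
abbrev Mm : Type := PowerSeries ℂ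
abbrev Ss : Submonoid Rr := nonZeroDivisors Rr
abbrev Ff : Type := FractionRing Rr
abbrev Vv : Type := LocalizedModule Ss Mm

/-- The embedding of power series into the localized module (a `ℂ(z)`-vector space). -/
def emb : Mm →ₗ[Rr] Vv := LocalizedModule.mkLinearMap Ss Mm

lemma psDeriv_eq (f : Mm) : psDeriv f = derivativeFun f := by
  ext n
  simp [psDeriv, derivativeFun, coeff_derivativeFun]
  ring

lemma D_add (x y : Mm) : psDeriv (x + y) = psDeriv x + psDeriv y := by
  simp [psDeriv_eq, derivativeFun_add]

lemma D_zero : psDeriv (0 : Mm) = 0 := by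
  ext n; simp [psDeriv]

/-- `psDeriv` as an additive monoid hom. -/
def DH : Mm →+ Mm := { toFun := psDeriv, map_zero' := D_zero, map_add' := D_add }

lemma D_mul (x y : Mm) : psDeriv (x * y) = x * psDeriv y + y * psDeriv x := by
  simp [psDeriv_eq, derivativeFun_mul, smul_eq_mul]

lemma smul_def (r : Rr) (x : Mm) : r • x = (r : Mm) * x := rfl

lemma coe_injective : Function.Injective (fun r : Rr => (r : Mm)) := by
  intro a b h
  simpa using (Polynomial.coe_inj).mp h

lemma D_poly_smul (r : Rr) (x : Mm) :
    psDeriv (r • x) = (Polynomial.derivative r) • x + r • psDeriv x := by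
  rw [smul_def, smul_def, smul_def, D_mul]
  rw [show psDeriv (r : Mm) = ((Polynomial.derivative r : Rr) : Mm) by
    rw [psDeriv_eq]; exact derivativeFun_coe r]
  ring

lemma emb_injective : Function.Injective emb := by
  intro x y h
  rw [← sub_eq_zero] at h ⊢
  rw [← map_sub] at h
  set z := x - y
  have : LocalizedModule.mk z (1 : Ss) = LocalizedModule.mk (0 : Mm) (1 : Ss) := by
    simpa [emb, LocalizedModule.mkLinearMap, LocalizedModule.zero_mk] using h
  rw [LocalizedModule.mk_eq] at this
  obtain ⟨u, hu⟩ := this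
  simp only [one_smul, smul_zero] at hu
  have hu' : ((u : Rr) : Mm) * z = 0 := hu
  rcases mul_eq_zero.mp hu' with h1 | h2
  · exact absurd (coe_injective (by simpa using h1))
      (nonZeroDivisors.coe_ne_zero u)
  · exact h2

lemma emb_smul (r : Rr) (x : Mm) : emb (r • x) = (algebraMap Rr Ff r) • emb x := by
  rw [map_smul, algebraMap_smul]

/-- The `ℂ(z)`-span of the images of a family of power series. -/
def W {ι : Type} (h : ι → Mm) : Submodule Ff Vv := Submodule.span Ff (Set.range (emb ∘ h))

lemma algMap_ne_zero {b : Rr} (hb : b ≠ 0) : algebraMap Rr Ff b ≠ 0 := fun h =>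
  hb (IsFractionRing.injective Rr Ff (by simpa using h))

lemma mem_W_of_rel {ι : Type} [Fintype ι] (h : ι → Mm) (x : Mm)
    (hx : ∃ b : Rr, b ≠ 0 ∧ ∃ a : ι → Rr, b • x = ∑ i, a i • h i) :
    emb x ∈ W h := by
  obtain ⟨b, hb, a, hrel⟩ := hx
  have h1 : (algebraMap Rr Ff b) • emb x = ∑ i, (algebraMap Rr Ff (a i)) • emb (h i) := by
    rw [← emb_smul, hrel, map_sum]
    exact Finset.sum_congr rfl fun i _ => emb_smul _ _
  have h2 : emb x = (algebraMap Rr Ff b)⁻¹ • ∑ i, (algebraMap Rr Ff (a i)) • emb (h i) := by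
    rw [← h1, inv_smul_smul₀ (algMap_ne_zero hb)]
  rw [h2]
  exact Submodule.smul_mem _ _ (Submodule.sum_smul_mem _ _ fun i _ =>
    Submodule.subset_span ⟨i, rfl⟩)

lemma rel_of_mem_W {ι : Type} [Fintype ι] (h : ι → Mm) (x : Mm)
    (hx : emb x ∈ W h) :
    ∃ b : Rr, b ≠ 0 ∧ ∃ a : ι → Rr, b • x = ∑ i, a i • h i := by
  rw [W, Set.range_comp] at hx
  rw [show emb '' (Set.range h) = Set.range (fun i => emb (h i)) by
    rw [← Set.range_comp]; rfl] at hx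
  rw [Submodule.mem_span_range_iff_exists_fun] at hx
  obtain ⟨c, hc⟩ := hx
  obtain ⟨b, hbint⟩ := IsLocalization.exist_integer_multiples Ss Finset.univ c
  choose a ha using fun i => hbint i (Finset.mem_univ i)
  refine ⟨(b : Rr), nonZeroDivisors.coe_ne_zero b, a, emb_injective ?_⟩
  rw [emb_smul, map_sum]
  have : (algebraMap Rr Ff (b : Rr)) • emb x
      = ∑ i, (algebraMap Rr Ff (b:Rr) * c i) • emb (h i) := by
    rw [← hc, Finset.smul_sum]
    exact Finset.sum_congr rfl fun i _ => by rw [← smul_assoc, smul_eq_mul]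
  rw [this]
  refine Finset.sum_congr rfl fun i _ => ?_
  rw [emb_smul, ha i, Algebra.smul_def]

lemma mem_W_self {ι : Type} (h : ι → Mm) (i : ι) : emb (h i) ∈ W h :=
  Submodule.subset_span ⟨i, rfl⟩

lemma mem_W_deriv {ι : Type} [Fintype ι] (h : ι → Mm) (x : Mm) (hx : emb x ∈ W h)
    (hh : ∀ i, emb (psDeriv (h i)) ∈ W h) : emb (psDeriv x) ∈ W h := by
  obtain ⟨b, hb, a, hrel⟩ := rel_of_mem_W h x hx
  have hder := congrArg psDeriv hrel
  rw [D_poly_smul] at hder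
  have hs : psDeriv (∑ i, a i • h i)
      = ∑ i, (Polynomial.derivative (a i) • h i + a i • psDeriv (h i)) := by
    rw [show psDeriv (∑ i, a i • h i) = DH (∑ i, a i • h i) from rfl, map_sum]
    exact Finset.sum_congr rfl fun i _ => D_poly_smul _ _
  rw [hs] at hder
  have key : b • psDeriv x
      = (∑ i, (Polynomial.derivative (a i) • h i + a i • psDeriv (h i)))
        - Polynomial.derivative b • x := by
    rw [← hder]; abel
  have h1 : (algebraMap Rr Ff b) • emb (psDeriv x)
      = emb ((∑ i, (Polynomial.derivative (a i) • h i + a i • psDeriv (h i)))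
        - Polynomial.derivative b • x) := by rw [← emb_smul, key]
  have h2 : emb ((∑ i, (Polynomial.derivative (a i) • h i + a i • psDeriv (h i)))
        - Polynomial.derivative b • x) ∈ W h := by
    rw [map_sub, map_sum]
    refine Submodule.sub_mem _ (Submodule.sum_mem _ fun i _ => ?_) ?_
    · rw [map_add, emb_smul, emb_smul]
      exact Submodule.add_mem _ (Submodule.smul_mem _ _ (mem_W_self h i))
        (Submodule.smul_mem _ _ (hh i))
    · rw [emb_smul]; exact Submodule.smul_mem _ _ hx
  have h3 : emb (psDeriv x) = (algebraMap Rr Ff b)⁻¹ •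
      ((algebraMap Rr Ff b) • emb (psDeriv x)) := by
    rw [inv_smul_smul₀ (algMap_ne_zero hb)]
  rw [h3, h1]
  exact Submodule.smul_mem _ _ h2

/-- If `f` lies in the span of a finite family of power series whose derivatives
stay in the span, then `f` is holonomic. -/
lemma holonomic_of_family {ι : Type} [Fintype ι] (h : ι → Mm) (f : Mm)
    (hf : emb f ∈ W h) (hD : ∀ i, emb (psDeriv (h i)) ∈ W h) : HolonomicPS f := by
  classical
  have hn : ∀ n, emb (psDeriv^[n] f) ∈ W h := by
    intro n; induction n with
    | zero => simpa using hf
    | succ n ih => rw [Function.iterate_succ_apply']; exact mem_W_deriv h _ ih hD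
  set m := Fintype.card ι with hm
  haveI : FiniteDimensional Ff (W h) :=
    FiniteDimensional.span_of_finite _ (Set.finite_range _)
  have hrank : Module.finrank Ff (W h) ≤ m := by
    have := finrank_span_le_card (R := Ff) (Set.range (emb ∘ h))
    refine le_trans this ?_
    rw [Set.toFinset_range]
    exact le_trans (Finset.card_image_le) (by simp [hm])
  set v : Fin (m+1) → W h := fun k => ⟨emb (psDeriv^[(k:ℕ)] f), hn k⟩ with hv
  have hnli : ¬ LinearIndependent Ff v := fun hli => by
    have := hli.fintype_card_le_finrank
    simp only [Fintype.card_fin] at this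
    omega
  obtain ⟨gc, hsum, k0, hk0⟩ := (Fintype.not_linearIndependent_iff (R := Ff) (v := v)).mp hnli
  have hsumV : ∑ k, gc k • emb (psDeriv^[(k:ℕ)] f) = 0 := by
    have := congrArg (Submodule.subtype (W h)) hsum
    simpa [v, Submodule.coe_sum] using this
  set T : Finset (Fin (m+1)) := Finset.univ.filter (fun k => gc k ≠ 0) with hT
  have hTne : T.Nonempty := ⟨k0, by simp [hT, hk0]⟩
  set e : Fin (m+1) := T.max' hTne with he
  have hge : gc e ≠ 0 := by
    have := T.max'_mem hTne
    simpa [hT] using this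
  have hle : ∀ k : Fin (m+1), gc k ≠ 0 → k ≤ e :=
    fun k hk => T.le_max' k (by simp [hT, hk])
  obtain ⟨b, hbint⟩ := IsLocalization.exist_integer_multiples Ss Finset.univ gc
  choose a ha using fun k => hbint k (Finset.mem_univ k)
  have ha0 : ∀ k, gc k = 0 → a k = 0 := by
    intro k hk
    apply IsFractionRing.injective Rr Ff
    rw [ha k, hk, smul_zero, map_zero]
  have hae : a e ≠ 0 := by
    intro h0
    have := ha e
    rw [h0, map_zero] at this
    have : algebraMap Rr Ff (b : Rr) * gc e = 0 := by
      rw [← Algebra.smul_def]; exact this.symm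
    rcases mul_eq_zero.mp this with h1 | h2
    · exact algMap_ne_zero (nonZeroDivisors.coe_ne_zero b) h1
    · exact hge h2
  have hsumM : ∑ k : Fin (m+1), a k • psDeriv^[(k:ℕ)] f = 0 := by
    apply emb_injective
    rw [map_sum, map_zero]
    have : ∑ k : Fin (m+1), emb (a k • psDeriv^[(k:ℕ)] f)
        = algebraMap Rr Ff (b:Rr) • ∑ k, gc k • emb (psDeriv^[(k:ℕ)] f) := by
      rw [Finset.smul_sum]
      refine Finset.sum_congr rfl fun k _ => ?_
      rw [emb_smul, ha k, Algebra.smul_def, mul_smul]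
    rw [this, hsumV, smul_zero]
  set e' : ℕ := (e : ℕ) with he'
  have he'lt : e' < m + 1 := e.isLt
  set A : ℕ → Rr := fun k => if hk : k < m+1 then a ⟨k, hk⟩ else 0 with hA
  have hsum_range : ∑ k ∈ Finset.range (m+1), A k • psDeriv^[k] f = 0 := by
    rw [Finset.sum_range]
    rw [← hsumM]
    refine Finset.sum_congr rfl fun k _ => ?_
    simp [hA, k.isLt, Nat.not_lt.mpr k.is_le]
  have hsum_e : ∑ k ∈ Finset.range (e'+1), A k • psDeriv^[k] f = 0 := by
    rw [← hsum_range]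
    apply Finset.sum_subset
    · exact Finset.range_subset_range.mpr (by omega)
    · intro k hk hk2
      simp only [Finset.mem_range] at hk hk2
      have hke : e' < k := by omega
      have : A k = 0 := by
        have hgz : gc ⟨k, hk⟩ = 0 := by
          by_contra hne
          have := hle ⟨k, hk⟩ hne
          rw [Fin.le_def] at this
          simp only at this
          omega
        simp [hA, hk, ha0 _ hgz]
      rw [this, zero_smul]
  refine ⟨e', fun j => A (e' - j), ?_, ?_⟩
  · simpa [hA, he'lt, Nat.lt_succ_iff.mp he'lt] using hae
  · have := Finset.sum_range_reflect (fun k => (A k : Mm) * psDeriv^[k] f) (e'+1)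
    calc ∑ j ∈ Finset.range (e'+1), ((A (e' - j) : Rr) : Mm) * psDeriv^[e'-j] f
        = ∑ j ∈ Finset.range (e'+1), (fun k => (A k : Mm) * psDeriv^[k] f) (e'+1-1-j) := by
          refine Finset.sum_congr rfl fun j hj => ?_
          simp only [Finset.mem_range] at hj
          have : e' + 1 - 1 - j = e' - j := by omega
          rw [this]
      _ = ∑ k ∈ Finset.range (e'+1), (A k : Mm) * psDeriv^[k] f := this
      _ = 0 := hsum_e

/-- A nonzero holonomic series satisfies a relation expressing a positive-order
derivative in terms of lower ones. -/
lemma reduce (f : Mm) (hf : HolonomicPS f) (hf0 : f ≠ 0) :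
    ∃ e : ℕ, 0 < e ∧ ∃ b : Rr, b ≠ 0 ∧ ∃ a : Fin e → Rr,
      b • psDeriv^[e] f = ∑ i, a i • psDeriv^[(i:ℕ)] f := by
  obtain ⟨e, q, hq0, hrel⟩ := hf
  rcases Nat.eq_zero_or_pos e with he | he
  · exfalso
    subst he
    rw [Finset.sum_range_one] at hrel
    simp only [Nat.sub_zero, Function.iterate_zero_apply] at hrel
    rcases mul_eq_zero.mp hrel with h1 | h2
    · exact hq0 (coe_injective (by simpa using h1))
    · exact hf0 h2
  · refine ⟨e, he, q 0, hq0, fun i => -(q (e - (i:ℕ))), ?_⟩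
    rw [Finset.sum_range_succ' (fun k => ((q k : Mm)) * psDeriv^[e-k] f) e] at hrel
    have h2 : (q 0 : Mm) * psDeriv^[e] f
        = -∑ k ∈ Finset.range e, (q (k+1) : Mm) * psDeriv^[e-(k+1)] f := by
      have := hrel
      simp only [Nat.sub_zero] at this
      linear_combination this
    have h3 : ∑ k ∈ Finset.range e, (q (k+1) : Mm) * psDeriv^[e-(k+1)] f
        = ∑ k ∈ Finset.range e, (q (e-k) : Mm) * psDeriv^[k] f := by
      rw [← Finset.sum_range_reflect (fun k => (q (e-k) : Mm) * psDeriv^[k] f) e]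
      refine Finset.sum_congr rfl fun k hk => ?_
      simp only [Finset.mem_range] at hk
      have h4 : e - (e - 1 - k) = k + 1 := by omega
      have h5 : e - 1 - k = e - (k+1) := by omega
      rw [h4, h5]
    rw [smul_def, h2, h3, Finset.sum_range]
    rw [← Finset.sum_neg_distrib]
    refine Finset.sum_congr rfl fun i _ => ?_
    rw [smul_def]
    push_cast
    ring

lemma holonomic_zero : HolonomicPS 0 := ⟨0, fun _ => 1, one_ne_zero, by simp⟩

lemma holonomic_add (f g : Mm) (hf0 : f ≠ 0) (hg0 : g ≠ 0)
    (hf : HolonomicPS f) (hg : HolonomicPS g) : HolonomicPS (f + g) := by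
  obtain ⟨e, he, b, hb, a, hrel⟩ := reduce f hf hf0
  obtain ⟨e', he', b', hb', a', hrel'⟩ := reduce g hg hg0
  set h : Fin e ⊕ Fin e' → Mm :=
    Sum.elim (fun i => psDeriv^[(i:ℕ)] f) (fun j => psDeriv^[(j:ℕ)] g) with hh
  have hmemf : ∀ i : ℕ, i ≤ e → emb (psDeriv^[i] f) ∈ W h := by
    intro i hi
    rcases lt_or_eq_of_le hi with hlt | heq
    · exact mem_W_self h (Sum.inl ⟨i, hlt⟩)
    · subst heq
      refine mem_W_of_rel h _ ⟨b, hb, Sum.elim a (fun _ => 0), ?_⟩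
      rw [Fintype.sum_sum_type]
      simpa [hh] using hrel
  have hmemg : ∀ j : ℕ, j ≤ e' → emb (psDeriv^[j] g) ∈ W h := by
    intro j hj
    rcases lt_or_eq_of_le hj with hlt | heq
    · exact mem_W_self h (Sum.inr ⟨j, hlt⟩)
    · subst heq
      refine mem_W_of_rel h _ ⟨b', hb', Sum.elim (fun _ => 0) a', ?_⟩
      rw [Fintype.sum_sum_type]
      simpa [hh] using hrel'
  refine holonomic_of_family h (f + g) ?_ ?_
  · rw [map_add]
    exact Submodule.add_mem _ (hmemf 0 (by omega)) (hmemg 0 (by omega))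
  · rintro (i | j)
    · have : psDeriv (h (Sum.inl i)) = psDeriv^[(i:ℕ)+1] f := by
        rw [Function.iterate_succ_apply']; rfl
      rw [this]
      exact hmemf _ i.isLt
    · have : psDeriv (h (Sum.inr j)) = psDeriv^[(j:ℕ)+1] g := by
        rw [Function.iterate_succ_apply']; rfl
      rw [this]
      exact hmemg _ j.isLt

lemma holonomic_mul (f g : Mm) (hf0 : f ≠ 0) (hg0 : g ≠ 0)
    (hf : HolonomicPS f) (hg : HolonomicPS g) : HolonomicPS (f * g) := by
  classical
  obtain ⟨e, he, b, hb, a, hrel⟩ := reduce f hf hf0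
  obtain ⟨e', he', b', hb', a', hrel'⟩ := reduce g hg hg0
  set h : Fin e × Fin e' → Mm :=
    fun p => psDeriv^[(p.1:ℕ)] f * psDeriv^[(p.2:ℕ)] g with hh
  have claimA : ∀ (i : ℕ), i ≤ e → ∀ j : Fin e',
      emb (psDeriv^[i] f * psDeriv^[(j:ℕ)] g) ∈ W h := by
    intro i hi j
    rcases lt_or_eq_of_le hi with hlt | heq
    · exact mem_W_self h (⟨i, hlt⟩, j)
    · subst heq
      refine mem_W_of_rel h _ ⟨b, hb, fun p => if p.2 = j then a p.1 else 0, ?_⟩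
      rw [← smul_mul_assoc, hrel, Finset.sum_mul, Fintype.sum_prod_type]
      refine Finset.sum_congr rfl fun t _ => ?_
      simp [ite_smul, smul_mul_assoc, hh]
  have claimB : ∀ (i : Fin e) (j : ℕ), j ≤ e' →
      emb (psDeriv^[(i:ℕ)] f * psDeriv^[j] g) ∈ W h := by
    intro i j hj
    rcases lt_or_eq_of_le hj with hlt | heq
    · exact mem_W_self h (i, ⟨j, hlt⟩)
    · subst heq
      refine mem_W_of_rel h _ ⟨b', hb', fun p => if p.1 = i then a' p.2 else 0, ?_⟩
      rw [mul_comm, ← smul_mul_assoc, hrel', Finset.sum_mul, Fintype.sum_prod_type,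
        Finset.sum_comm]
      refine Finset.sum_congr rfl fun s _ => ?_
      simp [ite_smul, smul_mul_assoc, hh, mul_comm]
  refine holonomic_of_family h (f * g) ?_ ?_
  · have h00 : f * g = h (⟨0, he⟩, ⟨0, he'⟩) := by simp [hh]
    rw [h00]
    exact mem_W_self h _
  · rintro ⟨i, j⟩
    have hD : psDeriv (h (i, j))
        = psDeriv^[(i:ℕ)] f * psDeriv^[(j:ℕ)+1] g
          + psDeriv^[(j:ℕ)] g * psDeriv^[(i:ℕ)+1] f := by
      rw [hh, D_mul, Function.iterate_succ_apply', Function.iterate_succ_apply']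
    rw [hD, map_add]
    refine Submodule.add_mem _ (claimB i _ j.isLt) ?_
    have : psDeriv^[(j:ℕ)] g * psDeriv^[(i:ℕ)+1] f
        = psDeriv^[(i:ℕ)+1] f * psDeriv^[(j:ℕ)] g := mul_comm _ _
    rw [this]
    exact claimA _ i.isLt j

end
end HoloAux

/-- Holonomic formal power series are closed under addition and multiplication. -/
theorem holonomicPS_add_mul (f g : PowerSeries ℂ)
    (hf : HolonomicPS f) (hg : HolonomicPS g) :
    HolonomicPS (f + g) ∧ HolonomicPS (f * g) := by
  constructor
  · by_cases hf0 : f = 0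
    · subst hf0; simpa using hg
    by_cases hg0 : g = 0
    · subst hg0; simpa using hf
    exact HoloAux.holonomic_add f g hf0 hg0 hf hg
  · by_cases hf0 : f = 0
    · subst hf0; simpa using HoloAux.holonomic_zero
    by_cases hg0 : g = 0
    · subst hg0; simpa using HoloAux.holonomic_zero
    exact HoloAux.holonomic_mul f g hf0 hg0 hf hg
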